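/- arXiv:2211.05948 — 2 statements merged into one kernel-verified Lean document; each statement's English description precedes it below -/
import Mathlib

section
/- Let L* = ℤ^{r+2} with standard basis e_0*, e_1*, …, e_{r+1}*, and for i = 1, …, r set w_i = e_{i−1}* − m_i e_i* + e_{i+1}* ∈ L*. Then the ℤ-linear map ν : L* → ℤ² defined by e_i* ↦ ν_i is surjective, and its kernel is exactly the subgroup of L* generated by w_1, …, w_r. -/
/-- The sequence of vectors `ν_i ∈ ℤ²` defined by `ν₀ = (0,1)`, `ν₁ = (1,0)` and the
recursion `ν_{i+1} = m_i • ν_i - ν_{i-1}`. -/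
def nuSeq (m : ℕ → ℤ) : ℕ → ℤ × ℤ
  | 0 => (0, 1)
  | 1 => (1, 0)
  | n + 2 => m (n + 1) • nuSeq m (n + 1) - nuSeq m n

/-- A sum over `Fin (r+2)` of a function vanishing on indices `≥ 2`. -/
lemma sum01 {r : ℕ} {M : Type*} [AddCommMonoid M] (g : Fin (r + 2) → M)
    (h : ∀ j : Fin (r + 2), 2 ≤ (j : ℕ) → g j = 0) :
    ∑ i, g i = g 0 + g 1 := by
  rw [Fin.sum_univ_succ, Fin.sum_univ_succ]
  have : ∀ i : Fin r, g i.succ.succ = 0 := by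
    intro i
    apply h
    simp [Fin.val_succ]
  simp only [this, Finset.sum_const_zero, add_zero]
  rfl

lemma sum_ite_coe {N : ℕ} (a : Fin N) (g : Fin N → ℤ × ℤ) :
    ∑ j : Fin N, (if (j : ℕ) = (a : ℕ) then g j else 0) = g a := by
  simp only [Fin.val_eq_val]
  simp [Finset.sum_ite_eq' Finset.univ a g]

/-- the ℤ-linear map `ν : ℤ^{r+2} → ℤ²`, `e_i* ↦ ν_i`, is surjective with
kernel exactly the subgroup generated by `w_i = e_{i-1}* - m_i e_i* + e_{i+1}*`, `i = 1, …, r`. -/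
theorem stmt14 (r : ℕ) (hr : 1 ≤ r) (m : ℕ → ℤ)
    (hm : ∀ i, 1 ≤ i → i ≤ r → 2 ≤ m i) :
    Function.Surjective
      (Fintype.linearCombination ℤ (fun i : Fin (r + 2) => nuSeq m (i : ℕ))) ∧
    LinearMap.ker (Fintype.linearCombination ℤ (fun i : Fin (r + 2) => nuSeq m (i : ℕ))) =
      Submodule.span ℤ (Set.range fun i : Fin r => (fun j : Fin (r + 2) =>
        if (j : ℕ) = (i : ℕ) then 1
        else if (j : ℕ) = (i : ℕ) + 1 then -(m ((i : ℕ) + 1))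
        else if (j : ℕ) = (i : ℕ) + 2 then 1 else 0 : Fin (r + 2) → ℤ)) := by
  set lc := Fintype.linearCombination ℤ (fun i : Fin (r + 2) => nuSeq m (i : ℕ)) with hlc
  set w : Fin r → (Fin (r + 2) → ℤ) := fun i : Fin r => (fun j : Fin (r + 2) =>
        if (j : ℕ) = (i : ℕ) then 1
        else if (j : ℕ) = (i : ℕ) + 1 then -(m ((i : ℕ) + 1))
        else if (j : ℕ) = (i : ℕ) + 2 then 1 else 0 : Fin (r + 2) → ℤ) with hw
  have hlcapp : ∀ f : Fin (r + 2) → ℤ, lc f = ∑ i, f i • nuSeq m (i : ℕ) := fun f =>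
    Fintype.linearCombination_apply ℤ _ f
  have hv0 : ((0 : Fin (r + 2)) : ℕ) = 0 := rfl
  have hv1 : ((1 : Fin (r + 2)) : ℕ) = 1 := by
    simp [Fin.val_one]
  -- the w_i are in the kernel
  have hwker : ∀ i : Fin r, lc (w i) = 0 := by
    intro i
    rw [hlcapp]
    have split : ∀ j : Fin (r + 2), w i j • nuSeq m (j : ℕ) =
        (if (j : ℕ) = (i : ℕ) then (1 : ℤ) • nuSeq m (j : ℕ) else 0) +
        (if (j : ℕ) = (i : ℕ) + 1 then (-(m ((i : ℕ) + 1))) • nuSeq m (j : ℕ) else 0) +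
        (if (j : ℕ) = (i : ℕ) + 2 then (1 : ℤ) • nuSeq m (j : ℕ) else 0) := by
      intro j
      simp only [hw]
      split_ifs <;> first | (exfalso; omega) | module
    rw [Finset.sum_congr rfl (fun j _ => split j)]
    rw [Finset.sum_add_distrib, Finset.sum_add_distrib]
    have hi0 : (i : ℕ) < r + 2 := by omega
    have hi1 : (i : ℕ) + 1 < r + 2 := by omega
    have hi2 : (i : ℕ) + 2 < r + 2 := by omega
    have e0 : ∑ j : Fin (r + 2), (if (j : ℕ) = (i : ℕ) then (1 : ℤ) • nuSeq m (j : ℕ) else 0)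
        = (1 : ℤ) • nuSeq m (i : ℕ) := by
      have := sum_ite_coe (⟨(i : ℕ), hi0⟩ : Fin (r + 2))
        (fun j => (1 : ℤ) • nuSeq m (j : ℕ))
      simpa using this
    have e1 : ∑ j : Fin (r + 2),
        (if (j : ℕ) = (i : ℕ) + 1 then (-(m ((i : ℕ) + 1))) • nuSeq m (j : ℕ) else 0)
        = (-(m ((i : ℕ) + 1))) • nuSeq m ((i : ℕ) + 1) := by
      have := sum_ite_coe (⟨(i : ℕ) + 1, hi1⟩ : Fin (r + 2))
        (fun j => (-(m ((i : ℕ) + 1))) • nuSeq m (j : ℕ))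
      simpa using this
    have e2 : ∑ j : Fin (r + 2),
        (if (j : ℕ) = (i : ℕ) + 2 then (1 : ℤ) • nuSeq m (j : ℕ) else 0)
        = (1 : ℤ) • nuSeq m ((i : ℕ) + 2) := by
      have := sum_ite_coe (⟨(i : ℕ) + 2, hi2⟩ : Fin (r + 2))
        (fun j => (1 : ℤ) • nuSeq m (j : ℕ))
      simpa using this
    rw [e0, e1, e2]
    have hrec : nuSeq m ((i : ℕ) + 2) = m ((i : ℕ) + 1) • nuSeq m ((i : ℕ) + 1) - nuSeq m (i : ℕ) := rfl
    rw [hrec]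
    module
  constructor
  · -- surjectivity
    rintro ⟨a, b⟩
    refine ⟨fun j => if (j : ℕ) = 0 then b else if (j : ℕ) = 1 then a else 0, ?_⟩
    rw [hlcapp]
    rw [sum01 (fun j : Fin (r + 2) => _ • nuSeq m (j : ℕ))
      (fun j hj => by show (if (j : ℕ) = 0 then b else if (j : ℕ) = 1 then a else 0) • nuSeq m (j : ℕ) = 0; rw [if_neg (by omega), if_neg (by omega), zero_smul])]
    simp only [hv0, hv1]
    show (b • nuSeq m 0 + a • nuSeq m 1) = (a, b)
    simp [nuSeq, Prod.ext_iff]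
  · -- kernel
    apply le_antisymm
    · -- ker ≤ span
      have key : ∀ n : ℕ, n ≤ r → ∀ f : Fin (r + 2) → ℤ, lc f = 0 →
          (∀ j : Fin (r + 2), n + 2 ≤ (j : ℕ) → f j = 0) →
          f ∈ Submodule.span ℤ (Set.range w) := by
        intro n
        induction n with
        | zero =>
          intro _ f hf hsupp
          have : f = 0 := by
            rw [hlcapp] at hf
            rw [sum01 (fun j : Fin (r + 2) => f j • nuSeq m (j : ℕ))
              (fun j hj => by show f j • nuSeq m (j : ℕ) = 0
                              rw [hsupp j (by omega), zero_smul])] at hf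
            simp only [hv0, hv1] at hf
            have hf' : f 0 • nuSeq m 0 + f 1 • nuSeq m 1 = 0 := hf
            simp only [nuSeq, Prod.ext_iff, Prod.smul_mk, Prod.fst_add, Prod.snd_add,
              smul_eq_mul, mul_zero, mul_one, zero_add, add_zero, Prod.fst_zero,
              Prod.snd_zero] at hf'
            funext j
            rcases Nat.lt_or_ge (j : ℕ) 2 with hj | hj
            · interval_cases h : (j : ℕ)
              · have : j = 0 := by apply Fin.ext; simp [hv0, h]
                rw [this]; exact hf'.2
              · have : j = 1 := by apply Fin.ext; simp [hv1, h]
                rw [this]; exact hf'.1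
            · exact hsupp j hj
          rw [this]; exact Submodule.zero_mem _
        | succ n ih =>
          intro hn f hf hsupp
          have hn' : n < r := by omega
          set c := f ⟨n + 2, by omega⟩ with hc
          set g := f - c • w ⟨n, hn'⟩ with hg
          have hgker : lc g = 0 := by
            rw [hg, map_sub, map_smul, hf, hwker, smul_zero, sub_zero]
          have hgsupp : ∀ j : Fin (r + 2), n + 2 ≤ (j : ℕ) → g j = 0 := by
            intro j hj
            simp only [hg, Pi.sub_apply, Pi.smul_apply, smul_eq_mul, hw, Fin.val_mk]
            rcases Nat.eq_or_lt_of_le hj with hj2 | hj2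
            · have hjval : j = ⟨n + 2, by omega⟩ := by
                apply Fin.ext; simp only [Fin.val_mk]; omega
              rw [if_neg (by omega), if_neg (by omega), if_pos (by omega), hjval, ← hc]
              ring
            · rw [hsupp j (by omega), if_neg (by omega), if_neg (by omega),
                if_neg (by omega)]
              ring
          have hgmem := ih (by omega) g hgker hgsupp
          have : f = g + c • w ⟨n, hn'⟩ := by rw [hg]; ring
          rw [this]
          exact Submodule.add_mem _ hgmem
            (Submodule.smul_mem _ _ (Submodule.subset_span ⟨⟨n, hn'⟩, rfl⟩))
      intro f hf
      exact key r le_rfl f (LinearMap.mem_ker.mp hf) (fun j hj => by omega)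
    · -- span ≤ ker
      rw [Submodule.span_le]
      rintro _ ⟨i, rfl⟩
      exact LinearMap.mem_ker.mpr (hwker i)
end

section
/- Let r ≥ 1, let m_1, …, m_r be integers with each m_j ≥ 2, let d_1, …, d_r be nonnegative integers, fix i with 1 ≤ i ≤ r, and let e be an integer with 0 ≤ e ≤ d_i. Then there exist nonnegative integers δ_0, δ_1, …, δ_{r+1} such that δ_{i−1} = e, δ_i = 0, δ_{i+1} = d_i − e, the equations δ_{j−1} − m_j δ_j + δ_{j+1} = d_j hold for all j = 1, …, r, and δ_j is weakly decreasing for j ≤ i and weakly increasing for j ≥ i. -/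
/-- Auxiliary recursive sequence: `s 0 = 0`, `s 1 = t`,
`s (k+2) = D k + c k * s (k+1) - s k`. -/
def stmt17seq (t : ℤ) (c D : ℕ → ℤ) : ℕ → ℤ
  | 0 => 0
  | 1 => t
  | (k+2) => D k + c k * stmt17seq t c D (k+1) - stmt17seq t c D k

lemma stmt17seq_step (t : ℤ) (c D : ℕ → ℤ) (ht : 0 ≤ t) (N : ℕ)
    (h : ∀ k, k + 2 ≤ N → 2 ≤ c k ∧ 0 ≤ D k) :
    ∀ k, k + 1 ≤ N →
      stmt17seq t c D k ≤ stmt17seq t c D (k+1) ∧ 0 ≤ stmt17seq t c D (k+1) := by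
  intro k
  induction k with
  | zero => intro _; simpa [stmt17seq] using ht
  | succ k ih =>
    intro hk
    obtain ⟨h1, h2⟩ := ih (by omega)
    obtain ⟨hc, hD⟩ := h k (by omega)
    have key : stmt17seq t c D (k+1) ≤ stmt17seq t c D (k+2) := by
      show stmt17seq t c D (k+1) ≤ D k + c k * stmt17seq t c D (k+1) - stmt17seq t c D k
      nlinarith [mul_le_mul_of_nonneg_right hc h2]
    exact ⟨key, le_trans h2 key⟩

lemma stmt17seq_mono (t : ℤ) (c D : ℕ → ℤ) (ht : 0 ≤ t) (N : ℕ)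
    (h : ∀ k, k + 2 ≤ N → 2 ≤ c k ∧ 0 ≤ D k) :
    ∀ a b, a ≤ b → b ≤ N → stmt17seq t c D a ≤ stmt17seq t c D b := by
  intro a b
  induction b generalizing a with
  | zero =>
    intro hab _
    have ha : a = 0 := by omega
    subst ha; exact le_refl _
  | succ b ih =>
    intro hab hbN
    rcases Nat.lt_or_ge a (b + 1) with hlt | hge
    · exact le_trans (ih a (by omega) (by omega))
        (stmt17seq_step t c D ht N h b (by omega)).1
    · have : a = b + 1 := by omega
      subst this; exact le_refl _

lemma stmt17seq_nonneg (t : ℤ) (c D : ℕ → ℤ) (ht : 0 ≤ t) (N : ℕ)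
    (h : ∀ k, k + 2 ≤ N → 2 ≤ c k ∧ 0 ≤ D k) :
    ∀ a, a ≤ N → 0 ≤ stmt17seq t c D a := by
  intro a ha
  have := stmt17seq_mono t c D ht N h 0 a (by omega) ha
  simpa [stmt17seq] using this

/-- given a chain of length `r` with self-intersection data `-m_j` (`m_j ≥ 2`),
degrees `d_j ≥ 0`, an index `1 ≤ i ≤ r` and `0 ≤ e ≤ d_i`, there are nonnegative integers
`δ_0, …, δ_{r+1}` with `δ_{i-1} = e`, `δ_i = 0`, `δ_{i+1} = d_i - e`, satisfying
`δ_{j-1} - m_j δ_j + δ_{j+1} = d_j` for `j = 1, …, r`, weakly decreasing for `j ≤ i` and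
weakly increasing for `j ≥ i`. -/
theorem stmt17 (r : ℕ) (hr : 1 ≤ r) (m : ℕ → ℤ)
    (hm : ∀ j, 1 ≤ j → j ≤ r → 2 ≤ m j)
    (d : ℕ → ℤ) (hd : ∀ j, 1 ≤ j → j ≤ r → 0 ≤ d j)
    (i : ℕ) (hi1 : 1 ≤ i) (hir : i ≤ r)
    (e : ℤ) (he0 : 0 ≤ e) (hed : e ≤ d i) :
    ∃ δ : ℕ → ℤ,
      (∀ j, j ≤ r + 1 → 0 ≤ δ j) ∧
      δ (i - 1) = e ∧ δ i = 0 ∧ δ (i + 1) = d i - e ∧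
      (∀ j, 1 ≤ j → j ≤ r → δ (j - 1) - m j * δ j + δ (j + 1) = d j) ∧
      (∀ j k, j ≤ k → k ≤ i → δ k ≤ δ j) ∧
      (∀ j k, i ≤ j → j ≤ k → k ≤ r + 1 → δ j ≤ δ k) := by
  set cA : ℕ → ℤ := fun k => m (i - k - 1) with hcA
  set DA : ℕ → ℤ := fun k => d (i - k - 1) with hDA
  set cB : ℕ → ℤ := fun k => m (i + k + 1) with hcB
  set DB : ℕ → ℤ := fun k => d (i + k + 1) with hDB
  set A : ℕ → ℤ := stmt17seq e cA DA with hA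
  set B : ℕ → ℤ := stmt17seq (d i - e) cB DB with hB
  have hAcond : ∀ k, k + 2 ≤ i → 2 ≤ cA k ∧ 0 ≤ DA k := by
    intro k hk
    exact ⟨hm _ (by omega) (by omega), hd _ (by omega) (by omega)⟩
  have hBcond : ∀ k, k + 2 ≤ r + 1 - i → 2 ≤ cB k ∧ 0 ≤ DB k := by
    intro k hk
    exact ⟨hm _ (by omega) (by omega), hd _ (by omega) (by omega)⟩
  have hde : 0 ≤ d i - e := by omega
  have hAmono := stmt17seq_mono e cA DA he0 i hAcond
  have hBmono := stmt17seq_mono (d i - e) cB DB hde (r + 1 - i) hBcond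
  have hA0 : A 0 = 0 := rfl
  have hA1 : A 1 = e := rfl
  have hB0 : B 0 = 0 := rfl
  have hB1 : B 1 = d i - e := rfl
  refine ⟨fun j => if j ≤ i then A (i - j) else B (j - i), ?_, ?_, ?_, ?_, ?_, ?_, ?_⟩
  · intro j hj
    by_cases h : j ≤ i
    · simp only [h, if_true]
      exact stmt17seq_nonneg e cA DA he0 i hAcond _ (by omega)
    · simp only [h, if_false]
      exact stmt17seq_nonneg (d i - e) cB DB hde (r + 1 - i) hBcond _ (by omega)
  · have h1 : i - 1 ≤ i := by omega
    have h2 : i - (i - 1) = 1 := by omega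
    simp only [h1, if_true, h2, hA1]
  · simp only [le_refl, if_true, Nat.sub_self, hA0]
  · have h1 : ¬ (i + 1 ≤ i) := by omega
    simp only [h1, if_false, Nat.add_sub_cancel_left, hB1]
  · intro j hj1 hjr
    rcases lt_trichotomy j i with hji | hji | hij
    · -- j < i : use A
      obtain ⟨k, hk⟩ : ∃ k, i = j + 1 + k := ⟨i - j - 1, by omega⟩
      have h1 : j - 1 ≤ i := by omega
      have h2 : j ≤ i := by omega
      have h3 : j + 1 ≤ i := by omega
      have e1 : i - (j - 1) = k + 2 := by omega
      have e2 : i - j = k + 1 := by omega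
      have e3 : i - (j + 1) = k := by omega
      simp only [h1, h2, h3, if_true, e1, e2, e3]
      have hAk2 : A (k + 2) = DA k + cA k * A (k + 1) - A k := rfl
      have hidx : i - k - 1 = j := by omega
      rw [hAk2, hDA, hcA]
      simp only [hidx]
      ring
    · -- j = i
      have h1 : j - 1 ≤ i := by omega
      have h2 : j ≤ i := by omega
      have h3 : ¬ (j + 1 ≤ i) := by omega
      have e1 : i - (j - 1) = 1 := by omega
      have e2 : i - j = 0 := by omega
      have e3 : j + 1 - i = 1 := by omega
      simp only [h1, h2, h3, if_true, if_false, e1, e2, e3, hA0, hA1, hB1]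
      rw [hji]; ring
    · -- j > i : use B
      obtain ⟨k, hk⟩ : ∃ k, j = i + 1 + k := ⟨j - i - 1, by omega⟩
      have h3 : ¬ (j + 1 ≤ i) := by omega
      have e1 : j + 1 - i = k + 2 := by omega
      have e2 : j - i = k + 1 := by omega
      have hBk2 : B (k + 2) = DB k + cB k * B (k + 1) - B k := rfl
      have hidx : i + k + 1 = j := by omega
      have hmj : ¬ (j ≤ i) := by omega
      by_cases hcase : j - 1 ≤ i
      · -- j = i + 1
        have hji' : j = i + 1 := by omega
        have e3 : i - (j - 1) = 0 := by omega
        simp only [h3, hmj, hcase, if_true, if_false, e1, e2, e3, hA0]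
        rw [hBk2, hDB, hcB]
        simp only [hidx]
        have hk0 : k = 0 := by omega
        subst hk0
        rw [hB0]
        ring
      · have e3 : j - 1 - i = k := by omega
        simp only [h3, hmj, hcase, if_false, e1, e2, e3]
        rw [hBk2, hDB, hcB]
        simp only [hidx]
        ring
  · intro j k hjk hki
    have hji : j ≤ i := by omega
    simp only [hki, hji, if_true]
    exact hAmono _ _ (by omega) (by omega)
  · intro j k hij hjk hkr
    by_cases hji : j ≤ i
    · have hj : j = i := by omega
      have e2 : i - j = 0 := by omega
      simp only [hji, if_true, e2, hA0]
      by_cases hk : k ≤ i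
      · have e3 : i - k = 0 := by omega
        simp only [hk, if_true, e3, hA0, le_refl]
      · simp only [hk, if_false]
        calc (0:ℤ) = B 0 := hB0.symm
          _ ≤ B (k - i) := hBmono _ _ (by omega) (by omega)
    · have hk : ¬ (k ≤ i) := by omega
      simp only [hji, hk, if_false]
      exact hBmono _ _ (by omega) (by omega)
end
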